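/- Let m > 0 and j ∈ ℕ. For every Schwartz function f on ℝ the function λ ↦ (λ² − m²)^{(2j+1)/4} f̂(λ) is square-integrable on (m, ∞), and the set of all such functions, as f ranges over all (complex-valued) Schwartz functions on ℝ, is dense in L²((m,∞), ℂ) with respect to Lebesgue measure. Here f̂ denotes the Fourier transform of f. -/

import Mathlib

open MeasureTheory

open Filter FourierTransform Set Metric
open scoped ENNReal Convolution Topology Pointwise

noncomputable section

/-!
STATEMENT 8: Let `m > 0` and `j ∈ ℕ`. For every Schwartz function `f` on `ℝ` the function
`λ ↦ (λ² − m²)^((2j+1)/4) · f̂(λ)` is square-integrable on `(m, ∞)`, and the set of all such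
functions (as `f` ranges over complex-valued Schwartz functions) is dense in `L²((m,∞), ℂ)`
with respect to Lebesgue measure.
-/

/-- The function `λ ↦ (λ² − m²)^((2j+1)/4) · f̂(λ)`. -/
def Zfun (m : ℝ) (j : ℕ) (f : SchwartzMap ℝ ℂ) : ℝ → ℂ := fun lam =>
  (((lam ^ 2 - m ^ 2) ^ ((2 * (j : ℝ) + 1) / 4) : ℝ) : ℂ) * Fourier.fourierIntegral Real.fourierChar volume (⇑f) lam

lemma zfun_memL2 (m : ℝ) (hm : 0 < m) (j : ℕ) (f : SchwartzMap ℝ ℂ) :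
    MemLp (Zfun m j f) 2 ((volume : Measure ℝ).restrict (Set.Ioi m)) := by
  set α : ℝ := (2 * (j : ℝ) + 1) / 4 with hα
  set F := SchwartzMap.fourierTransformCLM ℂ f with hF
  have hFeq : ∀ x : ℝ, Fourier.fourierIntegral Real.fourierChar volume (⇑f) x = F x := fun x => by
    rw [Fourier.fourierIntegral_def]; exact (Real.fourier_real_eq _ _).symm
  have hmeas : AEStronglyMeasurable (Zfun m j f) ((volume : Measure ℝ).restrict (Set.Ioi m)) := by
    apply Measurable.aestronglyMeasurable
    apply Measurable.mul
    · exact Complex.measurable_ofReal.comp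
        (((Real.continuous_rpow_const (by positivity)).comp
          (continuous_pow 2 |>.sub continuous_const)).measurable)
    · have hfe : Fourier.fourierIntegral Real.fourierChar volume (⇑f) = ⇑F := funext hFeq
      rw [hfe]
      exact F.continuous.measurable
  rw [memLp_two_iff_integrable_sq_norm hmeas]
  obtain ⟨C0, -, hC0⟩ := F.decay 0 0
  obtain ⟨C1, -, hC1⟩ := F.decay (2 * j + 3) 0
  have hC0' : ∀ x : ℝ, ‖F x‖ ≤ C0 := by
    intro x; have := hC0 x; simpa [norm_iteratedFDeriv_zero] using this
  have hC1' : ∀ x : ℝ, ‖x‖ ^ (2 * j + 3) * ‖F x‖ ≤ C1 := by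
    intro x; have := hC1 x; simpa [norm_iteratedFDeriv_zero] using this
  have hC0nn : 0 ≤ C0 := le_trans (norm_nonneg _) (hC0' 0)
  apply Integrable.mono' (g := fun x : ℝ => (C1 * C0) * x ^ (-2 : ℝ))
  · exact (integrableOn_Ioi_rpow_of_lt (by norm_num) hm).const_mul _
  · exact (hmeas.norm.aemeasurable.pow_const 2).aestronglyMeasurable
  · filter_upwards [ae_restrict_mem measurableSet_Ioi] with x hx
    have hxm : m < x := hx
    have hx0 : 0 < x := lt_trans hm hxm
    have hbase : (0:ℝ) ≤ x ^ 2 - m ^ 2 := by nlinarith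
    have h1 : ‖Zfun m j f x‖ = (x ^ 2 - m ^ 2) ^ α * ‖F x‖ := by
      rw [Zfun, norm_mul, hFeq, Complex.norm_real, Real.norm_eq_abs,
        abs_of_nonneg (Real.rpow_nonneg hbase _)]
    have h2 : ((x ^ 2 - m ^ 2) ^ α) ^ 2 ≤ x ^ (2 * j + 1) := by
      have : ((x ^ 2 - m ^ 2) ^ α) ^ 2 = (x ^ 2 - m ^ 2) ^ (α * 2) := by
        rw [← Real.rpow_natCast ((x ^ 2 - m ^ 2) ^ α) 2, ← Real.rpow_mul hbase]
        norm_num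
      rw [this]
      have hle : (x ^ 2 - m ^ 2) ^ (α * 2) ≤ (x ^ 2) ^ (α * 2) := by
        apply Real.rpow_le_rpow hbase (by nlinarith) (by positivity)
      refine hle.trans_eq ?_
      rw [← Real.rpow_natCast x 2, ← Real.rpow_mul hx0.le, ← Real.rpow_natCast x (2 * j + 1)]
      congr 1
      push_cast [hα]
      ring
    have h3 : ‖‖Zfun m j f x‖ ^ 2‖ = ((x ^ 2 - m ^ 2) ^ α) ^ 2 * ‖F x‖ ^ 2 := by
      rw [Real.norm_eq_abs, abs_of_nonneg (by positivity), h1]; ring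
    rw [h3]
    have h4 : ((x ^ 2 - m ^ 2) ^ α) ^ 2 * ‖F x‖ ^ 2 ≤ x ^ (2 * j + 1) * ‖F x‖ ^ 2 := by
      apply mul_le_mul_of_nonneg_right h2 (by positivity)
    refine h4.trans ?_
    have h5 : (x:ℝ) ^ (2 * j + 1) * ‖F x‖ ^ 2 = (x ^ (2 * j + 3) * ‖F x‖) * ‖F x‖ * x ^ (-2 : ℝ) := by
      have : x ^ (2 * j + 3) = x ^ (2 * j + 1) * x ^ 2 := by ring
      rw [this]
      rw [Real.rpow_neg hx0.le, Real.rpow_two]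
      field_simp
    rw [h5]
    have h6 : x ^ (2 * j + 3) * ‖F x‖ ≤ C1 := by
      have := hC1' x
      rwa [Real.norm_eq_abs, abs_of_nonneg hx0.le] at this
    have h7 : (x ^ (2 * j + 3) * ‖F x‖) * ‖F x‖ ≤ C1 * C0 := by
      apply mul_le_mul h6 (hC0' x) (norm_nonneg _) (le_trans (by positivity) h6)
    exact mul_le_mul_of_nonneg_right h7 (by positivity)

/-- A smooth compactly supported function gives rise to a Schwartz function. -/
lemma toSchwartz (w : ℝ → ℂ) (hw : ContDiff ℝ ((⊤:ℕ∞) : WithTop ℕ∞) w)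
    (hwc : HasCompactSupport w) :
    ∃ f : SchwartzMap ℝ ℂ, ⇑f = w := by
  refine ⟨⟨w, hw, fun k n => ?_⟩, rfl⟩
  have hc : Continuous fun x : ℝ => (‖x‖ ^ k : ℝ) * ‖iteratedFDeriv ℝ n w x‖ := by
    exact ((continuous_norm.pow k)).mul
      (hw.continuous_iteratedFDeriv (by exact_mod_cast le_top)).norm
  have hcs : HasCompactSupport fun x : ℝ => (‖x‖ ^ k : ℝ) * ‖iteratedFDeriv ℝ n w x‖ :=
    HasCompactSupport.mul_left (hwc.iteratedFDeriv n).norm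
  obtain ⟨C, hC⟩ := hcs.exists_bound_of_continuous hc
  refine ⟨C, fun x => ?_⟩
  have h := hC x
  rw [Real.norm_eq_abs, abs_of_nonneg (by positivity)] at h
  simpa using h

lemma zfun_eq (m : ℝ) (hm : 0 < m) (j : ℕ) (w : ℝ → ℂ)
    (hw : ContDiff ℝ ((⊤:ℕ∞) : WithTop ℕ∞) w)
    (hwc : HasCompactSupport w) {a : ℝ} (ha : m < a) (hsupp : Function.support w ⊆ Set.Ici a) :
    ∃ f : SchwartzMap ℝ ℂ, ∀ x ∈ Set.Ioi m, Zfun m j f x = w x := by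
  set α : ℝ := (2 * (j : ℝ) + 1) / 4 with hα
  set ψ : ℝ → ℂ := fun x => (((x ^ 2 - m ^ 2) ^ (-α) : ℝ) : ℂ) * w x with hψ
  have hts : tsupport w ⊆ Set.Ici a := closure_minimal hsupp isClosed_Ici
  have hpos : ∀ x ∈ tsupport w, 0 < x ^ 2 - m ^ 2 := by
    intro x hx
    have hax : a ≤ x := hts hx
    nlinarith
  have hψsmooth : ContDiff ℝ ((⊤:ℕ∞) : WithTop ℕ∞) ψ := by
    rw [contDiff_iff_contDiffAt]
    intro x
    by_cases hx : x ∈ tsupport w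
    · have h1 : ContDiffAt ℝ ((⊤:ℕ∞) : WithTop ℕ∞)
          (fun x : ℝ => ((x ^ 2 - m ^ 2) ^ (-α) : ℝ)) x := by
        apply ContDiffAt.rpow_const_of_ne
        · exact ((contDiff_id.pow 2).sub contDiff_const).contDiffAt
        · exact ne_of_gt (hpos x hx)
      exact ((Complex.ofRealCLM.contDiff.contDiffAt).comp x h1).mul hw.contDiffAt
    · have hev : ψ =ᶠ[nhds x] (fun _ => 0) := by
        filter_upwards [(isClosed_tsupport w).isOpen_compl.mem_nhds hx] with y hy
        simp [hψ, image_eq_zero_of_notMem_tsupport hy]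
      exact ContDiffAt.congr_of_eventuallyEq contDiffAt_const hev
  have hψc : HasCompactSupport ψ :=
    hwc.mul_left
  obtain ⟨ψS, hψS⟩ := toSchwartz ψ hψsmooth hψc
  refine ⟨(FourierTransform.fourierCLE ℂ (SchwartzMap ℝ ℂ)).symm ψS, fun x hx => ?_⟩
  have hfour : Fourier.fourierIntegral Real.fourierChar volume
      (⇑((FourierTransform.fourierCLE ℂ (SchwartzMap ℝ ℂ)).symm ψS)) = ⇑ψS := by
    have := FourierTransform.fourierCLE_apply (R := ℂ)
      ((FourierTransform.fourierCLE ℂ (SchwartzMap ℝ ℂ)).symm ψS)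
    rw [(FourierTransform.fourierCLE ℂ (SchwartzMap ℝ ℂ)).apply_symm_apply ψS] at this
    funext y
    rw [Fourier.fourierIntegral_def, ← Real.fourier_real_eq, ← SchwartzMap.fourier_coe, ← this]
  have hxm : m < x := hx
  have hb : 0 < x ^ 2 - m ^ 2 := by nlinarith
  rw [Zfun, hfour, hψS, hψ]
  rw [← mul_assoc, ← Complex.ofReal_mul, ← Real.rpow_add hb]
  simp [hα]

lemma exists_small (A : ℝ≥0∞) (hA : A ≠ ⊤) {b : ℝ≥0∞} (hb : b ≠ 0) :
    ∃ η : ℝ, 0 < η ∧ A ^ ((2 : ℝ≥0∞).toReal)⁻¹ * ENNReal.ofReal η < b := by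
  have hAp : A ^ ((2 : ℝ≥0∞).toReal)⁻¹ ≠ ⊤ :=
    ENNReal.rpow_ne_top_of_nonneg (by norm_num) hA
  have htend : Tendsto (fun η : ℝ => A ^ ((2 : ℝ≥0∞).toReal)⁻¹ * ENNReal.ofReal η)
      (nhdsWithin 0 (Set.Ioi 0)) (nhds 0) := by
    have h1 : Tendsto (fun η : ℝ => ENNReal.ofReal η) (nhdsWithin 0 (Set.Ioi 0)) (nhds 0) := by
      simpa using (ENNReal.continuous_ofReal.tendsto 0).mono_left nhdsWithin_le_nhds
    simpa using ENNReal.Tendsto.const_mul h1 (Or.inr hAp)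
  obtain ⟨η, hη, hηpos⟩ :=
    ((htend.eventually_lt_const (by exact hb.bot_lt)).and self_mem_nhdsWithin).exists
  exact ⟨η, hηpos, hη⟩

lemma exists_small2 (C : ℝ) {b : ℝ≥0∞} (hb : b ≠ 0) :
    ∃ δ : ℝ, 0 < δ ∧ ENNReal.ofReal (2 * δ) ^ ((2 : ℝ≥0∞).toReal)⁻¹ * ENNReal.ofReal C < b := by
  have htendR : Tendsto (fun δ : ℝ => (2 * δ) ^ ((2 : ℝ≥0∞).toReal)⁻¹ * C)
      (nhdsWithin 0 (Set.Ioi 0)) (nhds 0) := by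
    have h0 : Tendsto (fun δ : ℝ => 2 * δ) (nhdsWithin 0 (Set.Ioi 0)) (nhds 0) := by
      have : Tendsto (fun δ : ℝ => 2 * δ) (nhdsWithin 0 (Set.Ioi 0)) (nhds ((fun δ : ℝ => 2 * δ) 0)) :=
        ((continuous_const.mul continuous_id :
        Continuous fun δ : ℝ => 2 * δ).tendsto 0).mono_left
        (nhdsWithin_le_nhds (s := Set.Ioi (0:ℝ)))
      simpa only [mul_zero] using this
    have h1 := (Real.continuous_rpow_const
      (q := ((2 : ℝ≥0∞).toReal)⁻¹) (by norm_num)).tendsto 0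
    have h2 := (h1.comp h0).mul_const C
    simpa [Real.zero_rpow (by norm_num : ((2 : ℝ≥0∞).toReal)⁻¹ ≠ 0)] using h2
  have htend : Tendsto (fun δ : ℝ =>
      ENNReal.ofReal ((2 * δ) ^ ((2 : ℝ≥0∞).toReal)⁻¹ * C)) (nhdsWithin 0 (Set.Ioi 0)) (nhds 0) := by
    simpa [Function.comp_def] using (ENNReal.continuous_ofReal.tendsto 0).comp htendR
  obtain ⟨δ, hδlt, hδpos⟩ :=
    ((htend.eventually_lt_const (by exact hb.bot_lt)).and self_mem_nhdsWithin).exists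
  refine ⟨δ, hδpos, ?_⟩
  by_cases hC : 0 ≤ C
  · have hrw : ENNReal.ofReal (2 * δ) ^ ((2 : ℝ≥0∞).toReal)⁻¹ * ENNReal.ofReal C
        = ENNReal.ofReal ((2 * δ) ^ ((2 : ℝ≥0∞).toReal)⁻¹ * C) := by
      rw [ENNReal.ofReal_rpow_of_nonneg (by positivity) (by norm_num),
        ← ENNReal.ofReal_mul (by positivity)]
    rw [hrw]
    exact hδlt
  · push_neg at hC
    rw [ENNReal.ofReal_of_nonpos hC.le, mul_zero]
    exact hb.bot_lt

theorem Zfun_memL2_and_dense (m : ℝ) (hm : 0 < m) (j : ℕ) :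
    (∀ f : SchwartzMap ℝ ℂ, MemLp (Zfun m j f) 2 ((volume : Measure ℝ).restrict (Set.Ioi m))) ∧
      Dense {v : Lp ℂ 2 ((volume : Measure ℝ).restrict (Set.Ioi m)) |
        ∃ f : SchwartzMap ℝ ℂ,
          (v : ℝ → ℂ) =ᵐ[(volume : Measure ℝ).restrict (Set.Ioi m)] Zfun m j f} := by
  set μ : Measure ℝ := (volume : Measure ℝ).restrict (Set.Ioi m) with hμ
  refine ⟨fun f => zfun_memL2 m hm j f, ?_⟩
  intro v
  rw [EMetric.mem_closure_iff]
  intro ε hε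
  -- error budget
  set E : ℝ≥0∞ := min ε 1 with hE
  have hE0 : E ≠ 0 := by
    simp only [hE, ne_eq, min_eq_iff]
    rintro (⟨h, -⟩ | ⟨h, -⟩) <;> simp_all
  have hEtop : E ≠ ⊤ := ne_top_of_le_ne_top ENNReal.one_ne_top (min_le_right _ _)
  set b : ℝ≥0∞ := E / 4 with hb
  have hb0 : b ≠ 0 := (ENNReal.div_pos hE0 (by norm_num)).ne'
  have hbtop : b ≠ ⊤ := (ENNReal.div_lt_top hEtop (by norm_num)).ne
  -- step 1: approximate by a continuous compactly supported function
  have hv2 : MemLp (⇑v) 2 μ := Lp.memLp v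
  set V : ℝ → ℂ := (Set.Ioi m).indicator ⇑v with hV
  have hVmem : MemLp V 2 (volume : Measure ℝ) :=
    (memLp_indicator_iff_restrict measurableSet_Ioi).2 hv2
  obtain ⟨g, hgc, hgerr, hgcont, hgmem⟩ :=
    hVmem.exists_hasCompactSupport_eLpNorm_sub_le (p := 2) (by norm_num) hb0
  obtain ⟨Cg, hCg⟩ := hgc.exists_bound_of_continuous hgcont
  -- step 2: cut off near m
  obtain ⟨δ, hδ, hδlt⟩ := exists_small2 Cg hb0
  set χ : ℝ → ℝ := fun x => Real.smoothTransition ((x - (m + δ)) / δ) with hχ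
  set h : ℝ → ℂ := fun x => χ x • g x with hh
  have hχ01 : ∀ x, 0 ≤ χ x ∧ χ x ≤ 1 := fun x =>
    ⟨Real.smoothTransition.nonneg _, Real.smoothTransition.le_one _⟩
  have hχsupp : ∀ x, χ x ≠ 0 → m + δ < x := by
    intro x hx
    by_contra hc
    push_neg at hc
    exact hx (Real.smoothTransition.zero_of_nonpos (by
      apply div_nonpos_of_nonpos_of_nonneg <;> linarith))
  have hχ1 : ∀ x, m + 2 * δ ≤ x → χ x = 1 := by
    intro x hx
    apply Real.smoothTransition.one_of_one_le
    rw [le_div_iff₀ hδ]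
    linarith
  have hhcont : Continuous h := by
    have hc : Continuous χ := Real.smoothTransition.continuous.comp (by fun_prop)
    exact hc.smul hgcont
  have hhc : HasCompactSupport h := (hgc.smul_left (f := χ) : HasCompactSupport (χ • g))
  have hhsupp : Function.support h ⊆ {x : ℝ | m + δ < x} := by
    intro x hx
    have : χ x ≠ 0 := by
      intro h0
      apply hx
      simp [hh, h0]
    exact hχsupp x this
  -- error of the cutoff step
  have e2 : eLpNorm (fun x => g x - h x) 2 μ < b := by
    have heq : eLpNorm (fun x => g x - h x) 2 μ
        = eLpNorm ((Set.Ioc m (m + 2 * δ)).indicator (fun x => g x - h x)) 2 μ := by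
      apply eLpNorm_congr_ae
      filter_upwards [ae_restrict_mem measurableSet_Ioi] with x hx
      by_cases hx2 : x ≤ m + 2 * δ
      · rw [Set.indicator_of_mem (Set.mem_Ioc.2 ⟨hx, hx2⟩)]
      · rw [Set.indicator_of_notMem (by simp [hx2])]
        push_neg at hx2
        simp [hh, hχ1 x hx2.le]
    have hbound : ∀ x, ‖g x - h x‖ ≤ Cg := by
      intro x
      have : g x - h x = (1 - χ x) • g x := by
        simp [hh, sub_smul, one_smul]
      rw [this, norm_smul, Real.norm_eq_abs]
      have h1 : |1 - χ x| ≤ 1 := by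
        rcases hχ01 x with ⟨h0, h1⟩
        rw [abs_le]; constructor <;> linarith
      calc |1 - χ x| * ‖g x‖ ≤ 1 * Cg :=
            mul_le_mul h1 (hCg x) (norm_nonneg _) zero_le_one
        _ = Cg := one_mul _
    have hvol : m + 2 * δ - m = 2 * δ := by ring
    calc eLpNorm (fun x => g x - h x) 2 μ
        = eLpNorm ((Set.Ioc m (m + 2 * δ)).indicator (fun x => g x - h x)) 2 μ := heq
      _ ≤ eLpNorm ((Set.Ioc m (m + 2 * δ)).indicator (fun x => g x - h x)) 2 volume :=
          eLpNorm_mono_measure _ Measure.restrict_le_self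
      _ = eLpNorm (fun x => g x - h x) 2 (volume.restrict (Set.Ioc m (m + 2 * δ))) :=
          eLpNorm_indicator_eq_eLpNorm_restrict measurableSet_Ioc
      _ ≤ (volume.restrict (Set.Ioc m (m + 2 * δ))) Set.univ ^ ((2 : ℝ≥0∞).toReal)⁻¹
            * ENNReal.ofReal Cg := eLpNorm_le_of_ae_bound (ae_of_all _ hbound)
      _ = ENNReal.ofReal (2 * δ) ^ ((2 : ℝ≥0∞).toReal)⁻¹ * ENNReal.ofReal Cg := by
          rw [Measure.restrict_apply_univ, Real.volume_Ioc, hvol]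
      _ < b := hδlt
  -- step 3: mollify
  set K : Set ℝ := Metric.closedBall (0:ℝ) 1 + tsupport h with hK
  have hKcomp : IsCompact K := (isCompact_closedBall (0:ℝ) 1).add hhc
  have hKvol : volume K ≠ ⊤ := hKcomp.measure_lt_top.ne
  have hKmeas : MeasurableSet K := hKcomp.isClosed.measurableSet
  have htsubK : tsupport h ⊆ K := by
    intro x hx
    exact ⟨0, by simp, x, hx, by simp⟩
  obtain ⟨η, hη, hηlt⟩ := exists_small (volume K) hKvol hb0
  have hhu : UniformContinuous h := hhc.uniformContinuous_of_continuous hhcont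
  obtain ⟨δ₂, hδ₂, hδ₂prop⟩ := Metric.uniformContinuous_iff.mp hhu η hη
  set r : ℝ := min δ₂ (min 1 (δ / 2)) with hr
  have hr0 : 0 < r := by
    apply lt_min hδ₂
    apply lt_min one_pos
    linarith
  set φ : ContDiffBump (0 : ℝ) :=
    ⟨r / 2, r, by linarith, by linarith⟩ with hφ
  set w₀ : ℝ → ℂ := (φ.normed volume) ⋆[ContinuousLinearMap.lsmul ℝ ℝ, volume] h with hw₀
  have hw₀smooth : ContDiff ℝ ((⊤:ℕ∞) : WithTop ℕ∞) w₀ :=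
    φ.hasCompactSupport_normed.contDiff_convolution_left _ φ.contDiff_normed
      (hhcont.locallyIntegrable)
  have hw₀c : HasCompactSupport w₀ := φ.hasCompactSupport_normed.convolution _ hhc
  have hw₀supp : Function.support w₀ ⊆ Set.Ici (m + δ / 2) := by
    intro x hx
    obtain ⟨y, hy, z, hz, rfl⟩ := support_convolution_subset _ hx
    rw [φ.support_normed_eq] at hy
    have hy' : |y| < r := by simpa [Real.dist_eq] using hy
    have hz' : m + δ < z := hhsupp hz
    have hrd : r ≤ δ / 2 := le_trans (min_le_right _ _) (min_le_right _ _)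
    have : -(δ/2) ≤ y := by
      have := abs_lt.mp hy'
      linarith
    simp only [Set.mem_Ici]
    linarith
  have hw₀suppK : Function.support w₀ ⊆ K := by
    intro x hx
    obtain ⟨y, hy, z, hz, rfl⟩ := support_convolution_subset _ hx
    rw [φ.support_normed_eq] at hy
    have hy' : |y| < r := by simpa [Real.dist_eq] using hy
    have hr1 : r ≤ 1 := le_trans (min_le_right _ _) (min_le_left _ _)
    refine ⟨y, ?_, z, subset_tsupport h hz, rfl⟩
    simp only [Metric.mem_closedBall, Real.dist_eq, sub_zero]
    linarith [abs_lt.mp hy']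
  have hw₀close : ∀ x, dist (w₀ x) (h x) ≤ η := by
    intro x
    apply ContDiffBump.dist_normed_convolution_le hhcont.aestronglyMeasurable
    intro y hy
    apply le_of_lt
    apply hδ₂prop
    have : dist y x < r := hy
    exact lt_of_lt_of_le this (min_le_left _ _)
  -- error of the mollification step
  have e3 : eLpNorm (fun x => h x - w₀ x) 2 μ < b := by
    have heq : (fun x => h x - w₀ x) = K.indicator (fun x => h x - w₀ x) := by
      funext x
      by_cases hx : x ∈ K
      · rw [Set.indicator_of_mem hx]
      · rw [Set.indicator_of_notMem hx]
        have h1 : h x = 0 := by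
          by_contra hc
          exact hx (htsubK (subset_tsupport h hc))
        have h2 : w₀ x = 0 := by
          by_contra hc
          exact hx (hw₀suppK hc)
        rw [h1, h2, sub_zero]
    have hbound : ∀ x, ‖h x - w₀ x‖ ≤ η := by
      intro x
      rw [← dist_eq_norm, dist_comm]
      exact hw₀close x
    calc eLpNorm (fun x => h x - w₀ x) 2 μ
        ≤ eLpNorm (fun x => h x - w₀ x) 2 volume :=
          eLpNorm_mono_measure _ Measure.restrict_le_self
      _ = eLpNorm (K.indicator (fun x => h x - w₀ x)) 2 volume := by rw [← heq]
      _ = eLpNorm (fun x => h x - w₀ x) 2 (volume.restrict K) :=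
          eLpNorm_indicator_eq_eLpNorm_restrict hKmeas
      _ ≤ (volume.restrict K) Set.univ ^ ((2 : ℝ≥0∞).toReal)⁻¹ * ENNReal.ofReal η :=
          eLpNorm_le_of_ae_bound (ae_of_all _ hbound)
      _ = volume K ^ ((2 : ℝ≥0∞).toReal)⁻¹ * ENNReal.ofReal η := by
          rw [Measure.restrict_apply_univ]
      _ < b := hηlt
  -- the Schwartz function
  obtain ⟨f, hfeq⟩ := zfun_eq m hm j w₀ hw₀smooth hw₀c
    (by linarith : m < m + δ / 2) hw₀supp
  set wLp := (zfun_memL2 m hm j f).toLp (Zfun m j f) with hwLp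
  refine ⟨wLp, ⟨f, MemLp.coeFn_toLp _⟩, ?_⟩
  -- computing the distance
  have hVae : (⇑v : ℝ → ℂ) =ᵐ[μ] V := by
    filter_upwards [ae_restrict_mem measurableSet_Ioi] with x hx
    simp [hV, Set.indicator_of_mem hx]
  have hwae : (⇑wLp : ℝ → ℂ) =ᵐ[μ] w₀ := by
    have h1 : (⇑wLp : ℝ → ℂ) =ᵐ[μ] Zfun m j f := MemLp.coeFn_toLp _
    have h2 : Zfun m j f =ᵐ[μ] w₀ := by
      filter_upwards [ae_restrict_mem measurableSet_Ioi] with x hx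
      exact hfeq x hx
    exact h1.trans h2
  have hdist : edist v wLp = eLpNorm (fun x => V x - w₀ x) 2 μ := by
    rw [Lp.edist_def]
    apply eLpNorm_congr_ae
    filter_upwards [hVae, hwae] with x h1 h2
    simp [h1, h2]
  -- measurability of the pieces
  have hVsm : AEStronglyMeasurable V μ := hv2.aestronglyMeasurable.congr hVae
  have hgsm : AEStronglyMeasurable g μ := hgcont.aestronglyMeasurable
  have hhsm : AEStronglyMeasurable h μ := hhcont.aestronglyMeasurable
  have hwsm : AEStronglyMeasurable w₀ μ :=
    (hw₀smooth.continuous).aestronglyMeasurable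
  -- triangle inequality
  have e1 : eLpNorm (fun x => V x - g x) 2 μ ≤ b :=
    le_trans (eLpNorm_mono_measure _ Measure.restrict_le_self) hgerr
  have hsplit : (fun x => V x - w₀ x)
      = (fun x => (V x - g x) + ((g x - h x) + (h x - w₀ x))) := by
    funext x; ring
  have htri : eLpNorm (fun x => V x - w₀ x) 2 μ
      ≤ eLpNorm (fun x => V x - g x) 2 μ
        + (eLpNorm (fun x => g x - h x) 2 μ + eLpNorm (fun x => h x - w₀ x) 2 μ) := by
    rw [hsplit]
    refine le_trans (eLpNorm_add_le (hVsm.sub hgsm)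
      ((hgsm.sub hhsm).add (hhsm.sub hwsm)) one_le_two) ?_
    exact add_le_add_right (eLpNorm_add_le (hgsm.sub hhsm) (hhsm.sub hwsm) one_le_two) _
  have hfinal : eLpNorm (fun x => V x - w₀ x) 2 μ < E := by
    have h1 : eLpNorm (fun x => V x - g x) 2 μ
        + (eLpNorm (fun x => g x - h x) 2 μ + eLpNorm (fun x => h x - w₀ x) 2 μ)
        < b + (b + b) := by
      exact ENNReal.add_lt_add_of_le_of_lt (e1.trans_lt hbtop.lt_top).ne e1
        (ENNReal.add_lt_add e2 e3)
    have h2 : b + (b + b) = 3 * b := by ring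
    have h3 : (3 : ℝ≥0∞) * b < 4 * b := by
      rw [ENNReal.mul_lt_mul_iff_left hb0 hbtop]
      norm_num
    have h4 : (4 : ℝ≥0∞) * b = E := ENNReal.mul_div_cancel' (by norm_num) (by norm_num)
    calc eLpNorm (fun x => V x - w₀ x) 2 μ ≤ _ := htri
      _ < b + (b + b) := h1
      _ = 3 * b := h2
      _ < 4 * b := h3
      _ = E := h4
  rw [hdist]
  exact lt_of_lt_of_le hfinal (min_le_left _ _)

end
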